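/- Let G be a graph with nonnegative edge weights w, and for k ∈ ℕ let OPT_k be the maximum weight of a matching of size at most k. Then the function k ↦ OPT_k is concave, i.e., OPT_k + OPT_{k+2} ≤ 2·OPT_{k+1} for all k ∈ ℕ. -/

import Mathlib

open Finset

namespace Stmt4Aux

variable {V : Type*} [DecidableEq V]

/-- Two edges share a vertex. -/
def Share (e f : Sym2 V) : Prop := ∃ v : V, v ∈ e ∧ v ∈ f

lemma Share.symm {e f : Sym2 V} (h : Share e f) : Share f e := by
  obtain ⟨v, h1, h2⟩ := h; exact ⟨v, h2, h1⟩

/-- Pairwise vertex-disjoint edge set. -/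
def PD (A : Finset (Sym2 V)) : Prop := ∀ e ∈ A, ∀ f ∈ A, e ≠ f → ¬ Share e f

/-- auxiliary "line graph" on an edge set. -/
def auxG (E : Finset (Sym2 V)) : SimpleGraph (Sym2 V) where
  Adj e f := e ≠ f ∧ e ∈ E ∧ f ∈ E ∧ Share e f
  symm := ⟨fun e f ⟨h1, h2, h3, h4⟩ => ⟨h1.symm, h3, h2, h4.symm⟩⟩
  loopless := ⟨fun e h => h.1 rfl⟩

/-- predecessor at distance one less exists along shortest walks. -/
lemma pred_exists {W : Type*} (H : SimpleGraph W) {u v : W} (hr : H.Reachable u v)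
    (hne : v ≠ u) : ∃ g, H.Adj g v ∧ H.dist u g + 1 = H.dist u v := by
  obtain ⟨q, hq⟩ := hr.symm.exists_walk_length_eq_dist
  have hd : 0 < H.dist u v := hr.pos_dist_of_ne (Ne.symm hne)
  cases q with
  | nil => exact absurd rfl hne
  | @cons _ g _ h q' =>
    refine ⟨g, h.symm, ?_⟩
    have h1 : H.dist u g ≤ q'.length := by
      have := H.dist_le q'.reverse
      simpa using this
    have h2 : H.dist u v ≤ H.dist u g + 1 := by
      obtain ⟨r, hr'⟩ := (q'.reverse.reachable).exists_walk_length_eq_dist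
      have := H.dist_le (r.concat h.symm)
      simpa [SimpleGraph.Walk.length_concat, hr'] using this
    have h3 : q'.length + 1 = H.dist u v := by
      simpa [SimpleGraph.dist_comm] using hq
    omega

lemma exists_eq_of_three {B : Finset (Sym2 V)} (hB : PD B) {g f1 f2 f3 : Sym2 V}
    (hf1 : f1 ∈ B) (hf2 : f2 ∈ B) (hf3 : f3 ∈ B)
    (h1 : Share g f1) (h2 : Share g f2) (h3 : Share g f3) :
    f1 = f2 ∨ f1 = f3 ∨ f2 = f3 := by
  have key : ∀ fi ∈ B, ∀ fj ∈ B, ∀ v : V, v ∈ fi → v ∈ fj → fi = fj := by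
    intro fi hi fj hj v hvi hvj
    by_contra hne
    exact hB fi hi fj hj hne ⟨v, hvi, hvj⟩
  induction g using Sym2.ind with
  | _ x y =>
    have c1 : x ∈ f1 ∨ y ∈ f1 := by
      obtain ⟨v, hv, hv1⟩ := h1
      rcases Sym2.mem_iff.mp hv with h | h <;> subst h <;> tauto
    have c2 : x ∈ f2 ∨ y ∈ f2 := by
      obtain ⟨v, hv, hv1⟩ := h2
      rcases Sym2.mem_iff.mp hv with h | h <;> subst h <;> tauto
    have c3 : x ∈ f3 ∨ y ∈ f3 := by
      obtain ⟨v, hv, hv1⟩ := h3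
      rcases Sym2.mem_iff.mp hv with h | h <;> subst h <;> tauto
    rcases c1 with c1 | c1 <;> rcases c2 with c2 | c2 <;> rcases c3 with c3 | c3
    · exact Or.inl (key _ hf1 _ hf2 _ c1 c2)
    · exact Or.inl (key _ hf1 _ hf2 _ c1 c2)
    · exact Or.inr (Or.inl (key _ hf1 _ hf3 _ c1 c3))
    · exact Or.inr (Or.inr (key _ hf2 _ hf3 _ c2 c3))
    · exact Or.inr (Or.inr (key _ hf2 _ hf3 _ c2 c3))
    · exact Or.inr (Or.inl (key _ hf1 _ hf3 _ c1 c3))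
    · exact Or.inl (key _ hf1 _ hf2 _ c1 c2)
    · exact Or.inl (key _ hf1 _ hf2 _ c1 c2)

lemma excess_le {A B : Finset (Sym2 V)} (hA : PD A) (hB : PD B)
    {e0 : Sym2 V} (he0 : e0 ∈ B) (C : Finset (Sym2 V))
    (hCm : ∀ f, f ∈ C ↔ f ∈ A ∪ B ∧ (auxG (A ∪ B)).Reachable e0 f) :
    (B ∩ C).card ≤ (A ∩ C).card + 1 := by
  classical
  set H := auxG (A ∪ B) with hH
  -- membership in B from adjacency with an A-edge, and vice versa
  have memA : ∀ {g f : Sym2 V}, H.Adj g f → f ∈ B → g ∈ A := by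
    intro g f hadj hfB
    rcases Finset.mem_union.mp hadj.2.1 with h | h
    · exact h
    · exact absurd hadj.2.2.2 (hB g h f hfB hadj.1)
  have memB : ∀ {g f : Sym2 V}, H.Adj g f → f ∈ A → g ∈ B := by
    intro g f hadj hfA
    rcases Finset.mem_union.mp hadj.2.1 with h | h
    · exact absurd hadj.2.2.2 (hA g h f hfA hadj.1)
    · exact h
  -- the predecessor map
  set φ : Sym2 V → Sym2 V := fun f =>
    if h : ∃ g, H.Adj g f ∧ H.dist e0 g + 1 = H.dist e0 f then h.choose else f with hφ
  have hspec : ∀ f ∈ (B ∩ C).erase e0,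
      H.Adj (φ f) f ∧ H.dist e0 (φ f) + 1 = H.dist e0 f := by
    intro f hf
    obtain ⟨hne, hfBC⟩ := Finset.mem_erase.mp hf
    have hfC := (Finset.mem_inter.mp hfBC).2
    have hr : H.Reachable e0 f := ((hCm f).mp hfC).2
    have hex := pred_exists H hr hne
    simp only [hφ, dif_pos hex]
    exact hex.choose_spec
  have hmaps : ∀ f ∈ (B ∩ C).erase e0, φ f ∈ A ∩ C := by
    intro f hf
    obtain ⟨hadj, _⟩ := hspec f hf
    obtain ⟨_, hfBC⟩ := Finset.mem_erase.mp hf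
    obtain ⟨hfB, hfC⟩ := Finset.mem_inter.mp hfBC
    have hgA : φ f ∈ A := memA hadj hfB
    have hgC : φ f ∈ C := by
      refine (hCm (φ f)).mpr ⟨hadj.2.1, ?_⟩
      exact (((hCm f).mp hfC).2).trans (SimpleGraph.Adj.reachable hadj.symm)
    exact Finset.mem_inter.mpr ⟨hgA, hgC⟩
  have hinj : Set.InjOn φ ((B ∩ C).erase e0 : Finset (Sym2 V)) := by
    intro f1 hf1 f2 hf2 heq
    by_contra hne12
    obtain ⟨hadj1, hd1⟩ := hspec f1 hf1
    obtain ⟨hadj2, hd2⟩ := hspec f2 hf2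
    set g := φ f1 with hg
    have hadj2' : H.Adj g f2 := heq ▸ hadj2
    have hd2' : H.dist e0 g + 1 = H.dist e0 f2 := by rw [show H.dist e0 g = H.dist e0 (φ f2) from by rw [heq]]; exact hd2
    have hgAC : g ∈ A ∩ C := hmaps f1 hf1
    have hgA : g ∈ A := (Finset.mem_inter.mp hgAC).1
    have hgC : g ∈ C := (Finset.mem_inter.mp hgAC).2
    have hgr : H.Reachable e0 g := ((hCm g).mp hgC).2
    have hf1B : f1 ∈ B := (Finset.mem_inter.mp (Finset.mem_erase.mp hf1).2).1
    have hf2B : f2 ∈ B := (Finset.mem_inter.mp (Finset.mem_erase.mp hf2).2).1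
    rcases Nat.eq_zero_or_pos (H.dist e0 g) with hd0 | hdpos
    · -- g = e0 ∈ B, yet g adjacent to f1 ∈ B : contradiction
      have : g = e0 := (hgr.symm.dist_eq_zero_iff).mp (by rwa [SimpleGraph.dist_comm])
      have hgB : g ∈ B := this ▸ he0
      exact hB g hgB f1 hf1B hadj1.1 hadj1.2.2.2
    · -- take predecessor h of g, a third B-edge at g
      have hgne : g ≠ e0 := by
        intro h; rw [h, SimpleGraph.dist_self] at hdpos; omega
      obtain ⟨h, hadjh, hdh⟩ := pred_exists H hgr hgne
      have hhB : h ∈ B := memB hadjh hgA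
      have hne1 : f1 ≠ h := by
        intro hcontr
        have : H.dist e0 f1 = H.dist e0 h := by rw [hcontr]
        omega
      have hne2 : f2 ≠ h := by
        intro hcontr
        have : H.dist e0 f2 = H.dist e0 h := by rw [hcontr]
        omega
      rcases exists_eq_of_three hB hf1B hf2B hhB hadj1.2.2.2 hadj2'.2.2.2
        hadjh.symm.2.2.2 with h' | h' | h'
      · exact hne12 h'
      · exact hne1 h'
      · exact hne2 h'
  have hcard : ((B ∩ C).erase e0).card ≤ (A ∩ C).card :=
    Finset.card_le_card_of_injOn φ hmaps hinj
  have he0C : e0 ∈ C := (hCm e0).mpr ⟨Finset.mem_union_right _ he0, SimpleGraph.Reachable.refl _⟩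
  have he0BC : e0 ∈ B ∩ C := Finset.mem_inter.mpr ⟨he0, he0C⟩
  have := Finset.card_erase_of_mem he0BC
  omega
lemma exists_component {A B : Finset (Sym2 V)} (hA : PD A) (hB : PD B)
    (hcard : A.card < B.card) :
    ∃ C : Finset (Sym2 V), (∀ f ∈ C, f ∈ A ∪ B) ∧
      (∀ f ∈ C, ∀ g ∈ A ∪ B, Share f g → g ∈ C) ∧
      (B ∩ C).card = (A ∩ C).card + 1 := by
  classical
  set H := auxG (A ∪ B) with hH
  set comp : Sym2 V → Finset (Sym2 V) :=
    fun e => (A ∪ B).filter (fun f => H.Reachable e f) with hcomp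
  have comp_mem : ∀ e f, f ∈ comp e ↔ f ∈ A ∪ B ∧ H.Reachable e f := by
    intro e f; simp [hcomp]
  have comp_eq : ∀ e f, f ∈ comp e → comp f = comp e := by
    intro e f hf
    obtain ⟨hfE, hr⟩ := (comp_mem e f).mp hf
    ext x
    rw [comp_mem, comp_mem]
    exact and_congr_right fun _ => ⟨fun h => hr.trans h, fun h => hr.symm.trans h⟩
  -- first find some e ∈ A ∪ B with strict inequality on its component
  have hex : ∃ e ∈ A ∪ B, (A ∩ comp e).card < (B ∩ comp e).card := by
    by_contra hcon
    push_neg at hcon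
    set P : Finset (Finset (Sym2 V)) := (A ∪ B).image comp with hP
    have hdisj : ∀ C1 ∈ P, ∀ C2 ∈ P, C1 ≠ C2 → Disjoint C1 C2 := by
      intro C1 h1 C2 h2 hne
      rw [Finset.disjoint_left]
      intro x hx1 hx2
      obtain ⟨e1, _, rfl⟩ := Finset.mem_image.mp h1
      obtain ⟨e2, _, rfl⟩ := Finset.mem_image.mp h2
      exact hne ((comp_eq e1 x hx1) ▸ (comp_eq e2 x hx2))
    have cover : ∀ {S : Finset (Sym2 V)}, S ⊆ A ∪ B →
        S = P.biUnion (fun C => S ∩ C) := by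
      intro S hS
      ext f
      simp only [Finset.mem_biUnion, Finset.mem_inter]
      constructor
      · intro hf
        exact ⟨comp f, Finset.mem_image_of_mem comp (hS hf),
          hf, (comp_mem f f).mpr ⟨hS hf, SimpleGraph.Reachable.refl _⟩⟩
      · rintro ⟨C, _, hf, _⟩; exact hf
    have cardeq : ∀ {S : Finset (Sym2 V)}, S ⊆ A ∪ B →
        S.card = ∑ C ∈ P, (S ∩ C).card := by
      intro S hS
      conv_lhs => rw [cover hS]
      exact Finset.card_biUnion (fun C1 h1 C2 h2 hne =>
        Finset.disjoint_left.mpr (fun x hx1 hx2 =>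
          Finset.disjoint_left.mp (hdisj C1 h1 C2 h2 hne)
            (Finset.mem_inter.mp hx1).2 (Finset.mem_inter.mp hx2).2))
    have hB' : B.card ≤ A.card := by
      rw [cardeq Finset.subset_union_left, cardeq Finset.subset_union_right]
      apply Finset.sum_le_sum
      intro C hC
      obtain ⟨e, heE, rfl⟩ := Finset.mem_image.mp hC
      exact hcon e heE
    omega
  obtain ⟨e, heE, hlt⟩ := hex
  -- rebase at an element of B in the component
  have hBne : (B ∩ comp e).Nonempty := Finset.card_pos.mp (by omega)
  obtain ⟨e0, he0⟩ := hBne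
  obtain ⟨he0B, he0c⟩ := Finset.mem_inter.mp he0
  have hcompeq : comp e0 = comp e := comp_eq e e0 he0c
  have hCm : ∀ f, f ∈ comp e ↔ f ∈ A ∪ B ∧ H.Reachable e0 f := by
    intro f; rw [← hcompeq]; exact comp_mem e0 f
  have hle := excess_le hA hB he0B (comp e) hCm
  refine ⟨comp e, fun f hf => ((comp_mem e f).mp hf).1, ?_, by omega⟩
  intro f hf g hg hshare
  rcases eq_or_ne g f with rfl | hne
  · exact hf
  · obtain ⟨hfE, hr⟩ := (comp_mem e f).mp hf
    exact (comp_mem e g).mpr ⟨hg, hr.trans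
      (SimpleGraph.Adj.reachable ⟨hne.symm, hfE, hg, hshare⟩)⟩

lemma key_swap {A B : Finset (Sym2 V)} (hA : PD A) (hB : PD B)
    (hcard : A.card < B.card) :
    ∃ N1 N2 : Finset (Sym2 V), N1 ⊆ A ∪ B ∧ N2 ⊆ A ∪ B ∧ PD N1 ∧ PD N2 ∧
      N1.card = A.card + 1 ∧ N2.card + 1 = B.card ∧
      ∀ w : Sym2 V → ℝ,
        ∑ e ∈ N1, w e + ∑ e ∈ N2, w e = ∑ e ∈ A, w e + ∑ e ∈ B, w e := by
  classical
  obtain ⟨C, hCE, hCcl, hCcard⟩ := exists_component hA hB hcard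
  have d1 : Disjoint (A \ C) (B ∩ C) := by
    rw [Finset.disjoint_left]
    intro x hx1 hx2
    exact (Finset.mem_sdiff.mp hx1).2 (Finset.mem_inter.mp hx2).2
  have d2 : Disjoint (B \ C) (A ∩ C) := by
    rw [Finset.disjoint_left]
    intro x hx1 hx2
    exact (Finset.mem_sdiff.mp hx1).2 (Finset.mem_inter.mp hx2).2
  refine ⟨(A \ C) ∪ (B ∩ C), (B \ C) ∪ (A ∩ C), ?_, ?_, ?_, ?_, ?_, ?_, ?_⟩
  · intro x hx
    rcases Finset.mem_union.mp hx with h | h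
    · exact Finset.mem_union_left _ (Finset.mem_sdiff.mp h).1
    · exact Finset.mem_union_right _ (Finset.mem_inter.mp h).1
  · intro x hx
    rcases Finset.mem_union.mp hx with h | h
    · exact Finset.mem_union_right _ (Finset.mem_sdiff.mp h).1
    · exact Finset.mem_union_left _ (Finset.mem_inter.mp h).1
  · -- PD N1
    intro x hx y hy hne hsh
    rcases Finset.mem_union.mp hx with hx | hx <;> rcases Finset.mem_union.mp hy with hy | hy
    · exact hA x (Finset.mem_sdiff.mp hx).1 y (Finset.mem_sdiff.mp hy).1 hne hsh
    · obtain ⟨hyB, hyC⟩ := Finset.mem_inter.mp hy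
      exact (Finset.mem_sdiff.mp hx).2
        (hCcl y hyC x (Finset.mem_union_left _ (Finset.mem_sdiff.mp hx).1) hsh.symm)
    · obtain ⟨hxB, hxC⟩ := Finset.mem_inter.mp hx
      exact (Finset.mem_sdiff.mp hy).2
        (hCcl x hxC y (Finset.mem_union_left _ (Finset.mem_sdiff.mp hy).1) hsh)
    · exact hB x (Finset.mem_inter.mp hx).1 y (Finset.mem_inter.mp hy).1 hne hsh
  · -- PD N2
    intro x hx y hy hne hsh
    rcases Finset.mem_union.mp hx with hx | hx <;> rcases Finset.mem_union.mp hy with hy | hy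
    · exact hB x (Finset.mem_sdiff.mp hx).1 y (Finset.mem_sdiff.mp hy).1 hne hsh
    · obtain ⟨hyA, hyC⟩ := Finset.mem_inter.mp hy
      exact (Finset.mem_sdiff.mp hx).2
        (hCcl y hyC x (Finset.mem_union_right _ (Finset.mem_sdiff.mp hx).1) hsh.symm)
    · obtain ⟨hxA, hxC⟩ := Finset.mem_inter.mp hx
      exact (Finset.mem_sdiff.mp hy).2
        (hCcl x hxC y (Finset.mem_union_right _ (Finset.mem_sdiff.mp hy).1) hsh)
    · exact hA x (Finset.mem_inter.mp hx).1 y (Finset.mem_inter.mp hy).1 hne hsh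
  · rw [Finset.card_union_of_disjoint d1]
    have h1 : (A ∩ C).card + (A \ C).card = A.card := Finset.card_inter_add_card_sdiff A C
    omega
  · rw [Finset.card_union_of_disjoint d2]
    have h1 : (B ∩ C).card + (B \ C).card = B.card := Finset.card_inter_add_card_sdiff B C
    have h2 : (A ∩ C).card ≤ A.card := Finset.card_le_card Finset.inter_subset_left
    omega
  · intro w
    rw [Finset.sum_union d1, Finset.sum_union d2]
    have hA' : ∑ e ∈ A ∩ C, w e + ∑ e ∈ A \ C, w e = ∑ e ∈ A, w e :=
      Finset.sum_inter_add_sum_sdiff A C w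
    have hB' : ∑ e ∈ B ∩ C, w e + ∑ e ∈ B \ C, w e = ∑ e ∈ B, w e :=
      Finset.sum_inter_add_sum_sdiff B C w
    linarith
end Stmt4Aux

/-- A finset of edges of a simple graph forms a matching if all its edges are edges of
the graph and distinct edges share no vertex. -/
def IsMatchingFinset {V : Type*} [DecidableEq V] (G : SimpleGraph V)
    (M : Finset (Sym2 V)) : Prop :=
  (∀ e ∈ M, e ∈ G.edgeSet) ∧
    ∀ e ∈ M, ∀ f ∈ M, e ≠ f → ∀ v : V, ¬(v ∈ e ∧ v ∈ f)

/-- For a graph with nonnegative edge weights, the map `k ↦ OPT_k`, where `OPT_k` is the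
maximum weight of a matching of size at most `k`, is concave:
`OPT_k + OPT_{k+2} ≤ 2·OPT_{k+1}`. -/
theorem stmt_4 {V : Type*} [Fintype V] [DecidableEq V] (G : SimpleGraph V)
    (w : Sym2 V → ℝ) (hw : ∀ e, 0 ≤ w e) (OPT : ℕ → ℝ)
    (hOPT : ∀ k, IsGreatest
      {x : ℝ | ∃ M : Finset (Sym2 V), IsMatchingFinset G M ∧ M.card ≤ k ∧
        x = ∑ e ∈ M, w e} (OPT k)) :
    ∀ k, OPT k + OPT (k + 2) ≤ 2 * OPT (k + 1) := by
  intro k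
  obtain ⟨M1, hM1, hc1, he1⟩ := (hOPT k).1
  obtain ⟨M2, hM2, hc2, he2⟩ := (hOPT (k + 2)).1
  have ub := (hOPT (k + 1)).2
  have pd1 : Stmt4Aux.PD M1 := fun e he f hf hne ⟨v, hv1, hv2⟩ =>
    hM1.2 e he f hf hne v ⟨hv1, hv2⟩
  have pd2 : Stmt4Aux.PD M2 := fun e he f hf hne ⟨v, hv1, hv2⟩ =>
    hM2.2 e he f hf hne v ⟨hv1, hv2⟩
  by_cases hle : M2.card ≤ k + 1
  · have h1 : OPT k ≤ OPT (k + 1) :=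
      ub ⟨M1, hM1, hc1.trans (Nat.le_succ k), he1⟩
    have h2 : OPT (k + 2) ≤ OPT (k + 1) := ub ⟨M2, hM2, hle, he2⟩
    linarith
  · have hlt : M1.card < M2.card := by omega
    obtain ⟨N1, N2, hN1s, hN2s, hpd1, hpd2, hcard1, hcard2, hsum⟩ :=
      Stmt4Aux.key_swap pd1 pd2 hlt
    have hedge : ∀ e ∈ M1 ∪ M2, e ∈ G.edgeSet := by
      intro e he
      rcases Finset.mem_union.mp he with h | h
      · exact hM1.1 e h
      · exact hM2.1 e h
    have hmatch1 : IsMatchingFinset G N1 :=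
      ⟨fun e he => hedge e (hN1s he),
       fun e he f hf hne v hv => hpd1 e he f hf hne ⟨v, hv.1, hv.2⟩⟩
    have hmatch2 : IsMatchingFinset G N2 :=
      ⟨fun e he => hedge e (hN2s he),
       fun e he f hf hne v hv => hpd2 e he f hf hne ⟨v, hv.1, hv.2⟩⟩
    have h1 : ∑ e ∈ N1, w e ≤ OPT (k + 1) :=
      ub ⟨N1, hmatch1, by omega, rfl⟩
    have h2 : ∑ e ∈ N2, w e ≤ OPT (k + 1) :=
      ub ⟨N2, hmatch2, by omega, rfl⟩
    have := hsum w
    rw [he1, he2]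
    linarith
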